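/- Under the Bounded-Coefficient Scheme Hypotheses, assume additionally that all the maps T_1, …, T_m and I_1, …, I_m are continuous. Then for each common fixed point p ∈ F, the limit lim_{n→∞} ‖y_n − p‖ exists and equals lim_{n→∞} ‖x_n − p‖. -/

import Mathlib

open Filter

lemma summable_mul_nonneg {f g : ℕ → ℝ} (hf : Summable f) (hg : Summable g)
    (hf0 : ∀ n, 0 ≤ f n) (hg0 : ∀ n, 0 ≤ g n) : Summable fun n => f n * g n :=
  Summable.of_nonneg_of_le (fun n => mul_nonneg (hf0 n) (hg0 n))
    (fun n => mul_le_mul_of_nonneg_left (Summable.le_tsum hg n fun j _ => hg0 j) (hf0 n))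
    (hf.mul_right _)

lemma aux_conv (u G H : ℕ → ℝ) (hu : ∀ n, 0 ≤ u n) (hG : ∀ n, 1 ≤ G n)
    (hH : ∀ n, 0 ≤ H n) (hGs : Summable (fun n => G n - 1)) (hHs : Summable H)
    (hrec : ∀ n, u (n + 1) ≤ G n * u n + H n) :
    ∃ L, Tendsto u atTop (nhds L) := by
  set π : ℕ → ℝ := fun n => ∏ k ∈ Finset.range n, G k with hπdef
  have hπsucc : ∀ n, π (n + 1) = π n * G n := fun n => Finset.prod_range_succ _ _
  have hπ1 : ∀ n, 1 ≤ π n := by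
    intro n
    induction n with
    | zero => simp [hπdef]
    | succ n ih => rw [hπsucc n]; nlinarith [hG n]
  have hπpos : ∀ n, 0 < π n := fun n => lt_of_lt_of_le one_pos (hπ1 n)
  have hπmono : Monotone π := monotone_nat_of_le_succ (fun n => by
    rw [hπsucc n]; nlinarith [hπpos n, hG n])
  have hπbdd : ∀ n, π n ≤ Real.exp (∑' k, (G k - 1)) := by
    intro n
    calc π n ≤ ∏ k ∈ Finset.range n, Real.exp (G k - 1) :=
        Finset.prod_le_prod (fun k _ => by linarith [hG k])
          (fun k _ => by linarith [Real.add_one_le_exp (G k - 1)])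
      _ = Real.exp (∑ k ∈ Finset.range n, (G k - 1)) := (Real.exp_sum _ _).symm
      _ ≤ Real.exp (∑' k, (G k - 1)) :=
          Real.exp_le_exp.mpr (Summable.sum_le_tsum _ (fun k _ => by linarith [hG k]) hGs)
  have hπconv : Tendsto π atTop (nhds (⨆ n, π n)) :=
    tendsto_atTop_ciSup hπmono ⟨_, by rintro _ ⟨n, rfl⟩; exact hπbdd n⟩
  set w : ℕ → ℝ := fun n => u n / π n with hwdef
  have hw0 : ∀ n, 0 ≤ w n := fun n => div_nonneg (hu n) (hπpos n).le
  have hwrec : ∀ n, w (n + 1) ≤ w n + H n := by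
    intro n
    have hwn : w n * π n = u n := div_mul_cancel₀ _ (hπpos n).ne'
    have hGpos : (0:ℝ) < G n := lt_of_lt_of_le one_pos (hG n)
    have : w (n + 1) = u (n + 1) / π (n + 1) := rfl
    rw [this, hπsucc n, div_le_iff₀ (mul_pos (hπpos n) hGpos)]
    have h1 : u (n + 1) ≤ G n * u n + H n := hrec n
    have hπG1 : 1 ≤ π n * G n := by nlinarith [hπ1 n, hG n]
    have h2 : H n ≤ H n * (π n * G n) := le_mul_of_one_le_right (hH n) hπG1
    nlinarith [h1, h2, hwn]
  set s : ℕ → ℝ := fun n => ∑ k ∈ Finset.range n, H k with hsdef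
  have hts : Tendsto s atTop (nhds (∑' k, H k)) := hHs.hasSum.tendsto_sum_nat
  have hsle : ∀ n, s n ≤ ∑' k, H k := fun n => Summable.sum_le_tsum _ (fun k _ => hH k) hHs
  set t : ℕ → ℝ := fun n => w n - s n with htdef
  have htanti : Antitone t := antitone_nat_of_succ_le (fun n => by
    have h := hwrec n
    have : s (n + 1) = s n + H n := Finset.sum_range_succ _ _
    simp only [htdef]
    rw [this]; linarith)
  have htbdd : BddBelow (Set.range t) := ⟨-(∑' k, H k), by
    rintro _ ⟨n, rfl⟩; have := hw0 n; have := hsle n; simp only [htdef]; linarith⟩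
  have htconv : Tendsto t atTop (nhds (⨅ n, t n)) := tendsto_atTop_ciInf htanti htbdd
  have hwconv : Tendsto w atTop (nhds ((⨅ n, t n) + ∑' k, H k)) := by
    have h := htconv.add hts
    have : (fun n => t n + s n) = w := by funext n; simp [htdef]
    rwa [this] at h
  refine ⟨((⨅ n, t n) + ∑' k, H k) * (⨆ n, π n), ?_⟩
  have hmul := hwconv.mul hπconv
  have : (fun n => w n * π n) = u := by
    funext n; exact div_mul_cancel₀ _ (hπpos n).ne'
  rwa [this] at hmul


set_option maxHeartbeats 2000000 in
/-- under the bounded-coefficient scheme hypotheses with all maps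
continuous, for each `p ∈ F` the limit `lim ‖y n - p‖` exists and equals `lim ‖x n - p‖`. -/
theorem stmt11
    {X : Type*} [NormedAddCommGroup X] [NormedSpace ℝ X] [CompleteSpace X]
    [UniformConvexSpace X]
    {K : Set X} (hKne : K.Nonempty) (hKcl : IsClosed K) (hKco : Convex ℝ K)
    {m : ℕ} (hm : 1 ≤ m)
    (T I : Fin m → X → X)
    (hTK : ∀ i, Set.MapsTo (T i) K K) (hIK : ∀ i, Set.MapsTo (I i) K K)
    (hTcont : ∀ i, ContinuousOn (T i) K) (hIcont : ∀ i, ContinuousOn (I i) K)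
    (μ lam tμ tlam : Fin m → ℕ → ℝ)
    (hμ0 : ∀ i n, 0 ≤ μ i n) (hlam0 : ∀ i n, 0 ≤ lam i n)
    (htμ0 : ∀ i n, 0 ≤ tμ i n) (htlam0 : ∀ i n, 0 ≤ tlam i n)
    (hμlim : ∀ i, Tendsto (μ i) atTop (nhds 0)) (hlamlim : ∀ i, Tendsto (lam i) atTop (nhds 0))
    (htμlim : ∀ i, Tendsto (tμ i) atTop (nhds 0))
    (htlamlim : ∀ i, Tendsto (tlam i) atTop (nhds 0))
    (hμsum : ∀ i, Summable (μ i)) (hlamsum : ∀ i, Summable (lam i))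
    (htμsum : ∀ i, Summable (tμ i)) (htlamsum : ∀ i, Summable (tlam i))
    (φ ψ : Fin m → ℝ → ℝ)
    (hφmono : ∀ i, StrictMonoOn (φ i) (Set.Ici 0))
    (hφcont : ∀ i, ContinuousOn (φ i) (Set.Ici 0))
    (hφ0 : ∀ i, φ i 0 = 0) (hφpos : ∀ i t, 0 ≤ t → 0 ≤ φ i t)
    (hψmono : ∀ i, StrictMonoOn (ψ i) (Set.Ici 0))
    (hψcont : ∀ i, ContinuousOn (ψ i) (Set.Ici 0))
    (hψ0 : ∀ i, ψ i 0 = 0) (hψpos : ∀ i t, 0 ≤ t → 0 ≤ ψ i t)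
    (hI : ∀ i, ∀ n, 1 ≤ n → ∀ x ∈ K, ∀ y ∈ K,
      ‖(I i)^[n] x - (I i)^[n] y‖ ≤ ‖x - y‖ + tμ i n * ψ i ‖x - y‖ + tlam i n)
    (hT : ∀ i, ∀ n, 1 ≤ n → ∀ x ∈ K, ∀ y ∈ K,
      ‖(T i)^[n] x - (T i)^[n] y‖ ≤
        ‖(I i)^[n] x - (I i)^[n] y‖ + μ i n * φ i ‖(I i)^[n] x - (I i)^[n] y‖ + lam i n)
    (F : Set X)
    (hFdef : ∀ p, p ∈ F ↔ p ∈ K ∧ ∀ i, T i p = p ∧ I i p = p)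
    (hFne : F.Nonempty)
    (M Ms N Ns : Fin m → ℝ)
    (hM : ∀ i, 0 < M i) (hMs : ∀ i, 0 < Ms i) (hN : ∀ i, 0 < N i) (hNs : ∀ i, 0 < Ns i)
    (hφbound : ∀ i ξ, M i ≤ ξ → φ i ξ ≤ Ms i * ξ)
    (hψbound : ∀ i ζ, N i ≤ ζ → ψ i ζ ≤ Ns i * ζ)
    (alo ahi blo bhi : ℝ)
    (halo : 0 < alo) (hahi : alo < ahi) (hahi1 : ahi < 1)
    (hblo : 0 < blo) (hbhi : blo < bhi) (hbhi1 : bhi < 1)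
    (a b : Fin (m + 1) → ℕ → ℝ)
    (ha : ∀ j n, a j n ∈ Set.Icc alo ahi) (hb : ∀ j n, b j n ∈ Set.Icc blo bhi)
    (hasum : ∀ n, ∑ j, a j n = 1) (hbsum : ∀ n, ∑ j, b j n = 1)
    (x y : ℕ → X) (hx0 : x 0 ∈ K)
    (hy : ∀ n, y n = b 0 n • x n + ∑ i : Fin m, b i.succ n • (I i)^[n] (x n))
    (hxrec : ∀ n, x (n + 1) = a 0 n • x n + ∑ i : Fin m, a i.succ n • (T i)^[n] (y n))
    : ∀ p ∈ F, ∃ L : ℝ, Tendsto (fun n => ‖x n - p‖) atTop (nhds L) ∧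
      Tendsto (fun n => ‖y n - p‖) atTop (nhds L) := by
  intro p hp
  obtain ⟨hpK, hpfix⟩ := (hFdef p).mp hp
  have hTp : ∀ i n, (T i)^[n] p = p := fun i n => Function.iterate_fixed (hpfix i).1 n
  have hIp : ∀ i n, (I i)^[n] p = p := fun i n => Function.iterate_fixed (hpfix i).2 n
  -- coefficient facts
  have ha0 : ∀ j n, 0 ≤ a j n := fun j n => le_trans halo.le (ha j n).1
  have ha1 : ∀ j n, a j n ≤ ahi := fun j n => (ha j n).2
  have hb0' : ∀ j n, 0 ≤ b j n := fun j n => le_trans hblo.le (hb j n).1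
  have hb1 : ∀ j n, b j n ≤ 1 := fun j n => le_trans (hb j n).2 hbhi1.le
  have ha1' : ∀ j n, a j n ≤ 1 := fun j n => le_trans (ha j n).2 hahi1.le
  -- membership of iterates
  have hIiter : ∀ (i : Fin m) n z, z ∈ K → (I i)^[n] z ∈ K :=
    fun i n z hz => (hIK i).iterate n hz
  have hTiter : ∀ (i : Fin m) n z, z ∈ K → (T i)^[n] z ∈ K :=
    fun i n z hz => (hTK i).iterate n hz
  -- convex combination membership
  have comb : ∀ (c : Fin (m + 1) → ℝ), (∀ j, 0 ≤ c j) → (∑ j, c j) = 1 →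
      ∀ z ∈ K, ∀ (w : Fin m → X), (∀ i, w i ∈ K) →
      c 0 • z + ∑ i : Fin m, c i.succ • w i ∈ K := by
    intro c hc0 hc1 z hz w hw
    have hmem := hKco.sum_mem (t := Finset.univ) (w := c) (z := Fin.cons z w)
      (fun j _ => hc0 j) (by simpa using hc1)
      (fun j _ => by
        induction j using Fin.cases with
        | zero => simpa using hz
        | succ i => simpa using hw i)
    rw [Fin.sum_univ_succ] at hmem
    simpa using hmem
  have hxyK : ∀ n, x n ∈ K ∧ y n ∈ K := by
    intro n
    induction n with
    | zero =>
      refine ⟨hx0, ?_⟩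
      rw [hy 0]
      exact comb _ (hb0' · 0) (hbsum 0) _ hx0 _ (fun i => hIiter i 0 _ hx0)
    | succ n ih =>
      have hx' : x (n + 1) ∈ K := by
        rw [hxrec n]
        exact comb _ (ha0 · n) (hasum n) _ ih.1 _ (fun i => hTiter i n _ ih.2)
      refine ⟨hx', ?_⟩
      rw [hy (n + 1)]
      exact comb _ (hb0' · (n + 1)) (hbsum (n + 1)) _ hx' _
        (fun i => hIiter i (n + 1) _ hx')
  have hxK : ∀ n, x n ∈ K := fun n => (hxyK n).1
  have hyK : ∀ n, y n ∈ K := fun n => (hxyK n).2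
  -- linear bounds on gauges
  have hψlin : ∀ (i : Fin m) t, 0 ≤ t → ψ i t ≤ ψ i (N i) + Ns i * t := by
    intro i t ht
    rcases le_total t (N i) with h | h
    · have h1 : ψ i t ≤ ψ i (N i) := (hψmono i).monotoneOn ht (hN i).le h
      nlinarith [mul_nonneg (hNs i).le ht]
    · have h1 : ψ i t ≤ Ns i * t := hψbound i t h
      nlinarith [hψpos i (N i) (hN i).le]
  have hφlin : ∀ (i : Fin m) t, 0 ≤ t → φ i t ≤ φ i (M i) + Ms i * t := by
    intro i t ht
    rcases le_total t (M i) with h | h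
    · have h1 : φ i t ≤ φ i (M i) := (hφmono i).monotoneOn ht (hM i).le h
      nlinarith [mul_nonneg (hMs i).le ht]
    · have h1 : φ i t ≤ Ms i * t := hφbound i t h
      nlinarith [hφpos i (M i) (hM i).le]
  -- bounds for I and T iterates
  have hIbd : ∀ (i : Fin m) n, 1 ≤ n → ∀ z ∈ K,
      ‖(I i)^[n] z - p‖ ≤ (1 + tμ i n * Ns i) * ‖z - p‖ + (tμ i n * ψ i (N i) + tlam i n) := by
    intro i n hn z hz
    have h1 := hI i n hn z hz p hpK
    rw [hIp i n] at h1
    have h2 : ψ i ‖z - p‖ ≤ ψ i (N i) + Ns i * ‖z - p‖ := hψlin i _ (norm_nonneg _)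
    have h3 : tμ i n * ψ i ‖z - p‖ ≤ tμ i n * (ψ i (N i) + Ns i * ‖z - p‖) :=
      mul_le_mul_of_nonneg_left h2 (htμ0 i n)
    nlinarith [h1, h3]
  have hTbd : ∀ (i : Fin m) n, 1 ≤ n → ∀ z ∈ K,
      ‖(T i)^[n] z - p‖ ≤ (1 + μ i n * Ms i) *
        ((1 + tμ i n * Ns i) * ‖z - p‖ + (tμ i n * ψ i (N i) + tlam i n)) +
        (μ i n * φ i (M i) + lam i n) := by
    intro i n hn z hz
    have h1 := hT i n hn z hz p hpK
    rw [hIp i n, hTp i n] at h1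
    have hr0 : (0:ℝ) ≤ ‖(I i)^[n] z - p‖ := norm_nonneg _
    have h2 : φ i ‖(I i)^[n] z - p‖ ≤ φ i (M i) + Ms i * ‖(I i)^[n] z - p‖ := hφlin i _ hr0
    have h3 : μ i n * φ i ‖(I i)^[n] z - p‖ ≤ μ i n * (φ i (M i) + Ms i * ‖(I i)^[n] z - p‖) :=
      mul_le_mul_of_nonneg_left h2 (hμ0 i n)
    have h4 : ‖(T i)^[n] z - p‖ ≤ (1 + μ i n * Ms i) * ‖(I i)^[n] z - p‖ +
        (μ i n * φ i (M i) + lam i n) := by nlinarith [h1, h3]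
    have h5 := hIbd i n hn z hz
    have h6 : (1 + μ i n * Ms i) * ‖(I i)^[n] z - p‖ ≤ (1 + μ i n * Ms i) *
        ((1 + tμ i n * Ns i) * ‖z - p‖ + (tμ i n * ψ i (N i) + tlam i n)) :=
      mul_le_mul_of_nonneg_left h5 (by nlinarith [mul_nonneg (hμ0 i n) (hMs i).le])
    linarith [h4, h6]
  -- scalar sequences
  set P : ℕ → ℝ := fun n => ∑ i : Fin m, tμ i n * Ns i with hPdef
  set Q : ℕ → ℝ := fun n => ∑ i : Fin m, (tμ i n * ψ i (N i) + tlam i n) with hQdef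
  set R : ℕ → ℝ := fun n => ∑ i : Fin m, ((1 + μ i n * Ms i) * (1 + tμ i n * Ns i) - 1) with hRdef
  set S : ℕ → ℝ := fun n => ∑ i : Fin m,
    ((1 + μ i n * Ms i) * (tμ i n * ψ i (N i) + tlam i n) + (μ i n * φ i (M i) + lam i n)) with hSdef
  have hP0 : ∀ n, 0 ≤ P n := fun n => Finset.sum_nonneg fun i _ =>
    mul_nonneg (htμ0 i n) (hNs i).le
  have hQtermnn : ∀ (i : Fin m) n, 0 ≤ tμ i n * ψ i (N i) + tlam i n := fun i n =>
    add_nonneg (mul_nonneg (htμ0 i n) (hψpos i (N i) (hN i).le)) (htlam0 i n)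
  have hQ0 : ∀ n, 0 ≤ Q n := fun n => Finset.sum_nonneg fun i _ => hQtermnn i n
  have hR0 : ∀ n, 0 ≤ R n := fun n => Finset.sum_nonneg fun i _ => by
    nlinarith [mul_nonneg (hμ0 i n) (hMs i).le, mul_nonneg (htμ0 i n) (hNs i).le,
      mul_nonneg (mul_nonneg (hμ0 i n) (hMs i).le) (mul_nonneg (htμ0 i n) (hNs i).le)]
  have hS0 : ∀ n, 0 ≤ S n := fun n => Finset.sum_nonneg fun i _ => by
    have h1 := hQtermnn i n
    have h2 : (0:ℝ) ≤ μ i n * φ i (M i) + lam i n :=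
      add_nonneg (mul_nonneg (hμ0 i n) (hφpos i (M i) (hM i).le)) (hlam0 i n)
    nlinarith [mul_nonneg (hμ0 i n) (hMs i).le]
  -- summability
  have hPsum : Summable P := summable_sum fun i _ => (htμsum i).mul_right (Ns i)
  have hQsum : Summable Q := summable_sum fun i _ =>
    ((htμsum i).mul_right (ψ i (N i))).add (htlamsum i)
  have hμMs : ∀ i : Fin m, Summable fun n => μ i n * Ms i := fun i => (hμsum i).mul_right _
  have htμNs : ∀ i : Fin m, Summable fun n => tμ i n * Ns i := fun i => (htμsum i).mul_right _
  have hRsum : Summable R := summable_sum fun i _ => by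
    have h := ((hμMs i).add (htμNs i)).add
      (summable_mul_nonneg (hμMs i) (htμNs i)
        (fun n => mul_nonneg (hμ0 i n) (hMs i).le)
        (fun n => mul_nonneg (htμ0 i n) (hNs i).le))
    exact h.congr fun n => by ring
  have hSsum : Summable S := summable_sum fun i _ => by
    have hB : Summable fun n => tμ i n * ψ i (N i) + tlam i n :=
      ((htμsum i).mul_right _).add (htlamsum i)
    have hD : Summable fun n => μ i n * φ i (M i) + lam i n :=
      ((hμsum i).mul_right _).add (hlamsum i)
    have hprod : Summable fun n => (μ i n * Ms i) * (tμ i n * ψ i (N i) + tlam i n) :=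
      summable_mul_nonneg (hμMs i) hB
        (fun n => mul_nonneg (hμ0 i n) (hMs i).le) (fun n => hQtermnn i n)
    exact ((hB.add hprod).add hD).congr fun n => by ring
  -- key inequality: y bound
  have hcoefsum : ∀ n, b 0 n + ∑ i : Fin m, b i.succ n = 1 := by
    intro n
    have := hbsum n
    rwa [Fin.sum_univ_succ] at this
  have hacoefsum : ∀ n, a 0 n + ∑ i : Fin m, a i.succ n = 1 := by
    intro n
    have := hasum n
    rwa [Fin.sum_univ_succ] at this
  have hybd : ∀ n, 1 ≤ n → ‖y n - p‖ ≤ (1 + P n) * ‖x n - p‖ + Q n := by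
    intro n hn
    have hdec : y n - p = b 0 n • (x n - p) +
        ∑ i : Fin m, b i.succ n • ((I i)^[n] (x n) - p) := by
      have key : b 0 n • (x n - p) + ∑ i : Fin m, b i.succ n • ((I i)^[n] (x n) - p)
          = (b 0 n • x n + ∑ i : Fin m, b i.succ n • (I i)^[n] (x n)) -
            (b 0 n + ∑ i : Fin m, b i.succ n) • p := by
        simp only [smul_sub, Finset.sum_sub_distrib, add_smul, Finset.sum_smul]
        abel
      rw [hy n, key, hcoefsum n, one_smul]
    have hnorm : ‖y n - p‖ ≤ b 0 n * ‖x n - p‖ +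
        ∑ i : Fin m, b i.succ n * ‖(I i)^[n] (x n) - p‖ := by
      rw [hdec]
      refine le_trans (norm_add_le _ _) (add_le_add ?_ ?_)
      · rw [norm_smul, Real.norm_of_nonneg (hb0' 0 n)]
      · refine le_trans (norm_sum_le _ _) (le_of_eq (Finset.sum_congr rfl fun i _ => ?_))
        rw [norm_smul, Real.norm_of_nonneg (hb0' i.succ n)]
    have hterm : ∀ i : Fin m, b i.succ n * ‖(I i)^[n] (x n) - p‖ ≤
        b i.succ n * ‖x n - p‖ + (tμ i n * Ns i * ‖x n - p‖ + (tμ i n * ψ i (N i) + tlam i n)) := by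
      intro i
      have h5 := hIbd i n hn (x n) (hxK n)
      have hb' : 0 ≤ b i.succ n := hb0' i.succ n
      have hb'' : b i.succ n ≤ 1 := hb1 i.succ n
      nlinarith [mul_le_mul_of_nonneg_left h5 hb', norm_nonneg (x n - p),
        mul_nonneg (mul_nonneg (htμ0 i n) (hNs i).le) (norm_nonneg (x n - p)),
        hQtermnn i n]
    have hsum := Finset.sum_le_sum (fun i (_ : i ∈ Finset.univ) => hterm i)
    have e1 : ∑ i : Fin m, (b i.succ n * ‖x n - p‖ +
        (tμ i n * Ns i * ‖x n - p‖ + (tμ i n * ψ i (N i) + tlam i n)))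
        = (∑ i : Fin m, b i.succ n) * ‖x n - p‖ + P n * ‖x n - p‖ + Q n := by
      simp only [hPdef, hQdef, Finset.sum_add_distrib, Finset.sum_mul]
      ring
    calc ‖y n - p‖ ≤ b 0 n * ‖x n - p‖ +
          ∑ i : Fin m, b i.succ n * ‖(I i)^[n] (x n) - p‖ := hnorm
      _ ≤ b 0 n * ‖x n - p‖ + ((∑ i : Fin m, b i.succ n) * ‖x n - p‖ + P n * ‖x n - p‖ + Q n) :=
          add_le_add le_rfl (hsum.trans_eq e1)
      _ = (b 0 n + ∑ i : Fin m, b i.succ n) * ‖x n - p‖ + (P n * ‖x n - p‖ + Q n) := by ring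
      _ = (1 + P n) * ‖x n - p‖ + Q n := by rw [hcoefsum n]; ring
  -- key inequality: x recursion bound
  have hxbd : ∀ n, 1 ≤ n → ‖x (n + 1) - p‖ ≤
      a 0 n * ‖x n - p‖ + (1 - a 0 n + R n) * ‖y n - p‖ + S n := by
    intro n hn
    have hdec : x (n + 1) - p = a 0 n • (x n - p) +
        ∑ i : Fin m, a i.succ n • ((T i)^[n] (y n) - p) := by
      have key : a 0 n • (x n - p) + ∑ i : Fin m, a i.succ n • ((T i)^[n] (y n) - p)
          = (a 0 n • x n + ∑ i : Fin m, a i.succ n • (T i)^[n] (y n)) -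
            (a 0 n + ∑ i : Fin m, a i.succ n) • p := by
        simp only [smul_sub, Finset.sum_sub_distrib, add_smul, Finset.sum_smul]
        abel
      rw [hxrec n, key, hacoefsum n, one_smul]
    have hnorm : ‖x (n + 1) - p‖ ≤ a 0 n * ‖x n - p‖ +
        ∑ i : Fin m, a i.succ n * ‖(T i)^[n] (y n) - p‖ := by
      rw [hdec]
      refine le_trans (norm_add_le _ _) (add_le_add ?_ ?_)
      · rw [norm_smul, Real.norm_of_nonneg (ha0 0 n)]
      · refine le_trans (norm_sum_le _ _) (le_of_eq (Finset.sum_congr rfl fun i _ => ?_))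
        rw [norm_smul, Real.norm_of_nonneg (ha0 i.succ n)]
    have hterm : ∀ i : Fin m, a i.succ n * ‖(T i)^[n] (y n) - p‖ ≤
        a i.succ n * ‖y n - p‖ + (((1 + μ i n * Ms i) * (1 + tμ i n * Ns i) - 1) * ‖y n - p‖ +
          ((1 + μ i n * Ms i) * (tμ i n * ψ i (N i) + tlam i n) + (μ i n * φ i (M i) + lam i n))) := by
      intro i
      have h5 := hTbd i n hn (y n) (hyK n)
      have ha' : 0 ≤ a i.succ n := ha0 i.succ n
      have ha'' : a i.succ n ≤ 1 := ha1' i.succ n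
      have hCA1 : 1 ≤ (1 + μ i n * Ms i) * (1 + tμ i n * Ns i) := by
        nlinarith [mul_nonneg (hμ0 i n) (hMs i).le, mul_nonneg (htμ0 i n) (hNs i).le,
          mul_nonneg (mul_nonneg (hμ0 i n) (hMs i).le) (mul_nonneg (htμ0 i n) (hNs i).le)]
      have hCBD : (0:ℝ) ≤ (1 + μ i n * Ms i) * (tμ i n * ψ i (N i) + tlam i n) +
          (μ i n * φ i (M i) + lam i n) := by
        have := hQtermnn i n
        have h2 : (0:ℝ) ≤ μ i n * φ i (M i) + lam i n :=
          add_nonneg (mul_nonneg (hμ0 i n) (hφpos i (M i) (hM i).le)) (hlam0 i n)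
        nlinarith [mul_nonneg (hμ0 i n) (hMs i).le]
      nlinarith [mul_le_mul_of_nonneg_left h5 ha', norm_nonneg (y n - p),
        mul_nonneg (sub_nonneg.mpr hCA1) (norm_nonneg (y n - p)), hCBD]
    have hsum := Finset.sum_le_sum (fun i (_ : i ∈ Finset.univ) => hterm i)
    have e1 : ∑ i : Fin m, (a i.succ n * ‖y n - p‖ +
        (((1 + μ i n * Ms i) * (1 + tμ i n * Ns i) - 1) * ‖y n - p‖ +
          ((1 + μ i n * Ms i) * (tμ i n * ψ i (N i) + tlam i n) + (μ i n * φ i (M i) + lam i n))))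
        = (∑ i : Fin m, a i.succ n) * ‖y n - p‖ + R n * ‖y n - p‖ + S n := by
      simp only [hRdef, hSdef, Finset.sum_add_distrib, Finset.sum_mul]
      ring
    have e2 : ∑ i : Fin m, a i.succ n = 1 - a 0 n := by linarith [hacoefsum n]
    calc ‖x (n + 1) - p‖ ≤ a 0 n * ‖x n - p‖ +
          ∑ i : Fin m, a i.succ n * ‖(T i)^[n] (y n) - p‖ := hnorm
      _ ≤ a 0 n * ‖x n - p‖ + ((∑ i : Fin m, a i.succ n) * ‖y n - p‖ + R n * ‖y n - p‖ + S n) :=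
          add_le_add le_rfl (hsum.trans_eq e1)
      _ = a 0 n * ‖x n - p‖ + (1 - a 0 n + R n) * ‖y n - p‖ + S n := by rw [e2]; ring
  -- combined recursion
  set G : ℕ → ℝ := fun n => (1 + P n) * (1 + R n) with hGdef
  set H : ℕ → ℝ := fun n => (1 + R n) * Q n + S n with hHdef
  have hG1 : ∀ n, 1 ≤ G n := fun n => by
    simp only [hGdef]; nlinarith [hP0 n, hR0 n, mul_nonneg (hP0 n) (hR0 n)]
  have hH0 : ∀ n, 0 ≤ H n := fun n => by
    simp only [hHdef]
    nlinarith [hR0 n, hQ0 n, hS0 n, mul_nonneg (hR0 n) (hQ0 n)]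
  have hrec : ∀ n, 1 ≤ n → ‖x (n + 1) - p‖ ≤ G n * ‖x n - p‖ + H n := by
    intro n hn
    have h1 := hxbd n hn
    have h2 := hybd n hn
    have hcoef : (0:ℝ) ≤ 1 - a 0 n + R n := by linarith [ha1' 0 n, hR0 n]
    have h3 : (1 - a 0 n + R n) * ‖y n - p‖ ≤
        (1 - a 0 n + R n) * ((1 + P n) * ‖x n - p‖ + Q n) :=
      mul_le_mul_of_nonneg_left h2 hcoef
    simp only [hGdef, hHdef]
    nlinarith [h1, h3, norm_nonneg (x n - p), ha0 0 n, hP0 n, hQ0 n, hR0 n,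
      mul_nonneg (ha0 0 n) (mul_nonneg (hP0 n) (norm_nonneg (x n - p))),
      mul_nonneg (ha0 0 n) (hQ0 n)]
  have hGsum : Summable fun n => G n - 1 := by
    have h := (hPsum.add hRsum).add (summable_mul_nonneg hPsum hRsum hP0 hR0)
    exact h.congr fun n => by simp only [hGdef]; ring
  have hHsum : Summable H := by
    have h := (hQsum.add (summable_mul_nonneg hRsum hQsum hR0 hQ0)).add hSsum
    exact h.congr fun n => by simp only [hHdef]; ring
  -- apply core lemma to shifted sequence
  obtain ⟨L, hL⟩ := aux_conv (fun n => ‖x (n + 1) - p‖) (fun n => G (n + 1)) (fun n => H (n + 1))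
    (fun n => norm_nonneg _) (fun n => hG1 _) (fun n => hH0 _)
    ((summable_nat_add_iff 1).mpr hGsum) ((summable_nat_add_iff 1).mpr hHsum)
    (fun n => hrec (n + 1) (Nat.le_add_left 1 n))
  have hLu : Tendsto (fun n => ‖x n - p‖) atTop (nhds L) :=
    (tendsto_add_atTop_iff_nat 1).mp hL
  refine ⟨L, hLu, ?_⟩
  -- now show y converges to the same limit
  have he : Tendsto (fun n => |‖x n - p‖ - L|) atTop (nhds 0) := by
    have h := (hLu.sub_const L).abs
    simpa using h
  have he' : Tendsto (fun n => |‖x (n + 1) - p‖ - L|) atTop (nhds 0) :=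
    (tendsto_add_atTop_iff_nat 1).mpr he
  have hPlim : Tendsto P atTop (nhds 0) := hPsum.tendsto_atTop_zero
  have hQlim : Tendsto Q atTop (nhds 0) := hQsum.tendsto_atTop_zero
  have hRlim : Tendsto R atTop (nhds 0) := hRsum.tendsto_atTop_zero
  have hSlim : Tendsto S atTop (nhds 0) := hSsum.tendsto_atTop_zero
  -- bounds
  obtain ⟨U, hU⟩ : ∃ U, ∀ n, ‖x n - p‖ ≤ U := by
    obtain ⟨U, hU⟩ := hLu.bddAbove_range
    exact ⟨U, fun n => hU ⟨n, rfl⟩⟩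
  have hU0 : 0 ≤ U := le_trans (norm_nonneg _) (hU 0)
  set V : ℝ := max ‖y 0 - p‖ ((1 + ∑' n, P n) * U + ∑' n, Q n) with hVdef
  have hPle : ∀ n, P n ≤ ∑' k, P k := fun n => Summable.le_tsum hPsum n fun j _ => hP0 j
  have hQle : ∀ n, Q n ≤ ∑' k, Q k := fun n => Summable.le_tsum hQsum n fun j _ => hQ0 j
  have hV : ∀ n, ‖y n - p‖ ≤ V := by
    intro n
    match n with
    | 0 => exact le_max_left _ _
    | Nat.succ k =>
      have h1 := hybd (k + 1) (Nat.le_add_left 1 k)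
      refine le_trans h1 (le_trans ?_ (le_max_right _ _))
      have h2 := hU (k + 1)
      have h3 := hPle (k + 1)
      have h4 := hQle (k + 1)
      nlinarith [hP0 (k + 1), norm_nonneg (x (k + 1) - p), hU0]
  have hV0 : 0 ≤ V := le_trans (norm_nonneg _) (hV 0)
  -- squeeze
  have h1ahi : (0:ℝ) < 1 - ahi := by linarith
  set lo : ℕ → ℝ := fun n => L - (|‖x n - p‖ - L| + |‖x (n + 1) - p‖ - L| +
    R n * V + S n) / (1 - ahi) with hlodef
  set hi : ℕ → ℝ := fun n => L + (|‖x n - p‖ - L| + (P n * U + Q n)) with hhidef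
  have hlolim : Tendsto lo atTop (nhds L) := by
    have h : Tendsto (fun n => (|‖x n - p‖ - L| + |‖x (n + 1) - p‖ - L| +
        R n * V + S n) / (1 - ahi)) atTop (nhds ((0 + 0 + 0 * V + 0) / (1 - ahi))) :=
      (((he.add he').add (hRlim.mul_const V)).add hSlim).div_const _
    have h2 := (tendsto_const_nhds : Tendsto (fun _ : ℕ => L) atTop (nhds L)).sub h
    simpa using h2
  have hhilim : Tendsto hi atTop (nhds L) := by
    have h : Tendsto (fun n => |‖x n - p‖ - L| + (P n * U + Q n)) atTop
        (nhds (0 + (0 * U + 0))) := he.add ((hPlim.mul_const U).add hQlim)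
    have h2 := (tendsto_const_nhds : Tendsto (fun _ : ℕ => L) atTop (nhds L)).add h
    simpa using h2
  have hupper : ∀ n, 1 ≤ n → ‖y n - p‖ ≤ hi n := by
    intro n hn
    have h1 := hybd n hn
    have h2 : ‖x n - p‖ - L ≤ |‖x n - p‖ - L| := le_abs_self _
    have h3 : P n * ‖x n - p‖ ≤ P n * U := mul_le_mul_of_nonneg_left (hU n) (hP0 n)
    simp only [hhidef]
    nlinarith [h1, h2, h3]
  have hlower : ∀ n, 1 ≤ n → lo n ≤ ‖y n - p‖ := by
    intro n hn
    have h1 := hxbd n hn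
    set num : ℝ := |‖x n - p‖ - L| + |‖x (n + 1) - p‖ - L| + R n * V + S n with hnumdef
    have hnum0 : 0 ≤ num := by
      have := abs_nonneg (‖x n - p‖ - L)
      have := abs_nonneg (‖x (n + 1) - p‖ - L)
      have := mul_nonneg (hR0 n) hV0
      have := hS0 n
      simp only [hnumdef]; linarith
    have key : (1 - ahi) * (L - ‖y n - p‖) ≤ num := by
      rcases le_or_gt (‖y n - p‖) L with hc | hc
      · have ha0n := ha0 0 n
        have ha1n := ha1 0 n
        have h2 : (1 - a 0 n) * (L - ‖y n - p‖) ≤ num := by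
          have e1 : ‖x (n + 1) - p‖ - L ≥ -|‖x (n + 1) - p‖ - L| := neg_abs_le _
          have e2 : ‖x n - p‖ - L ≤ |‖x n - p‖ - L| := le_abs_self _
          have e3 : a 0 n * (‖x n - p‖ - L) ≤ a 0 n * |‖x n - p‖ - L| :=
            mul_le_mul_of_nonneg_left e2 ha0n
          have e4 : a 0 n * |‖x n - p‖ - L| ≤ |‖x n - p‖ - L| := by
            nlinarith [abs_nonneg (‖x n - p‖ - L), hahi1]
          have e5 : R n * ‖y n - p‖ ≤ R n * V := mul_le_mul_of_nonneg_left (hV n) (hR0 n)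
          simp only [hnumdef]
          nlinarith [h1]
        have h3 : (1 - ahi) * (L - ‖y n - p‖) ≤ (1 - a 0 n) * (L - ‖y n - p‖) :=
          mul_le_mul_of_nonneg_right (by linarith) (by linarith)
        linarith
      · nlinarith [h1ahi]
    simp only [hlodef, ← hnumdef]
    rw [sub_le_iff_le_add']
    have : L - ‖y n - p‖ ≤ num / (1 - ahi) := by
      rw [le_div_iff₀ h1ahi]; nlinarith [key]
    linarith
  exact tendsto_of_tendsto_of_tendsto_of_le_of_le' hlolim hhilim
    (eventually_atTop.mpr ⟨1, hlower⟩) (eventually_atTop.mpr ⟨1, hupper⟩)
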